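/- arXiv:2211.11888 — 4 statements merged into one kernel-verified Lean document; each statement's English description precedes it below -/
import Mathlib

section
/- First-order identifiability of binomial mixtures: let n ≥ 1, let θ₁, …, θ_K ∈ (0,1) be distinct, and suppose 1 ≤ K ≤ (n+1)/2. If real coefficients α₁,…,α_K and β₁,…,β_K satisfy, for all y ∈ {0,1,…,n}, ∑_{i=1}^K α_i f(y; θ_i, n) + ∑_{i=1}^K β_i ∂f/∂θ_i (y; θ_i, n) = 0, where f(y;θ,n) = C(n,y) θ^y (1-θ)^{n-y} is the binomial pmf, then α₁ = β₁ = ⋯ = α_K = β_K = 0. -/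
open Polynomial

/-- The Binomial(n, θ) probability mass function. -/
noncomputable def binomPMF (n y : ℕ) (θ : ℝ) : ℝ :=
  (n.choose y : ℝ) * θ ^ y * (1 - θ) ^ (n - y)

/-- The partial derivative of the Binomial(n, θ) pmf with respect to θ. -/
noncomputable def binomPMFDeriv (n y : ℕ) (θ : ℝ) : ℝ :=
  (if 1 ≤ y ∧ y ≤ n then (n : ℝ) * ((n - 1).choose (y - 1) : ℝ)
      * (1 - θ) ^ (n - y) * θ ^ (y - 1) else 0)
    - (if y ≤ n - 1 then (n : ℝ) * ((n - 1).choose y : ℝ)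
      * (1 - θ) ^ (n - 1 - y) * θ ^ y else 0)

lemma bern_eval (n y : ℕ) (x : ℝ) :
    (bernsteinPolynomial ℝ n y).eval x = binomPMF n y x := by
  simp [bernsteinPolynomial, binomPMF]

lemma binomPMF_hasDerivAt (n y : ℕ) (hy : y ≤ n) (x : ℝ) :
    HasDerivAt (binomPMF n y) (binomPMFDeriv n y x) x := by
  have h1 : HasDerivAt (fun t : ℝ => (n.choose y : ℝ) * t ^ y)
      ((n.choose y : ℝ) * ((y : ℝ) * x ^ (y - 1))) x :=
    (hasDerivAt_pow y x).const_mul _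
  have h2 : HasDerivAt (fun t : ℝ => (1 - t) ^ (n - y))
      (-(((n - y : ℕ) : ℝ) * (1 - x) ^ (n - y - 1))) x := by
    have := ((hasDerivAt_pow (n - y) (1 - x)).comp x
      ((hasDerivAt_const x (1 : ℝ)).sub (hasDerivAt_id x)))
    simpa [Function.comp_def] using this
  have h3 := h1.mul h2
  have hfun : binomPMF n y = fun t : ℝ => ((n.choose y : ℝ) * t ^ y) * (1 - t) ^ (n - y) := by
    funext t; simp [binomPMF]
  rw [hfun]
  convert h3 using 1
  · rfl
  · rfl
  · rfl
  -- value equality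
  have hA : (if 1 ≤ y ∧ y ≤ n then (n : ℝ) * ((n - 1).choose (y - 1) : ℝ)
      * (1 - x) ^ (n - y) * x ^ (y - 1) else 0)
      = (n.choose y : ℝ) * ((y : ℝ) * x ^ (y - 1)) * (1 - x) ^ (n - y) := by
    by_cases hy1 : 1 ≤ y
    · rw [if_pos ⟨hy1, hy⟩]
      have hnat : n * (n - 1).choose (y - 1) = n.choose y * y := by
        have hn1 : 1 ≤ n := le_trans hy1 hy
        have h := Nat.add_one_mul_choose_eq (n - 1) (y - 1)
        have e1 : n - 1 + 1 = n := by omega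
        have e2 : y - 1 + 1 = y := by omega
        rwa [e1, e2] at h
      have : ((n : ℝ) * ((n - 1).choose (y - 1) : ℝ)) = (n.choose y : ℝ) * (y : ℝ) := by
        exact_mod_cast congrArg (Nat.cast : ℕ → ℝ) hnat
      rw [mul_assoc ((n:ℝ)), ← mul_assoc, ← mul_assoc, this]; ring
    · have hy0 : y = 0 := by omega
      subst hy0; simp
  have hB : (if y ≤ n - 1 then (n : ℝ) * ((n - 1).choose y : ℝ)
      * (1 - x) ^ (n - 1 - y) * x ^ y else 0)
      = (n.choose y : ℝ) * x ^ y * (((n - y : ℕ) : ℝ) * (1 - x) ^ (n - y - 1)) := by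
    by_cases hyn : y < n
    · rw [if_pos (by omega)]
      have hnat : n * (n - 1).choose y = n.choose y * (n - y) := by
        have h1 := Nat.add_one_mul_choose_eq (n - 1) y
        have e1 : n - 1 + 1 = n := by omega
        rw [e1] at h1
        rw [h1, Nat.choose_succ_right_eq]
      have hcast : ((n : ℝ) * ((n - 1).choose y : ℝ)) = (n.choose y : ℝ) * ((n - y : ℕ) : ℝ) := by
        exact_mod_cast congrArg (Nat.cast : ℕ → ℝ) hnat
      have hexp : n - 1 - y = n - y - 1 := by omega
      rw [hexp, mul_assoc ((n:ℝ)), ← mul_assoc, ← mul_assoc, hcast]; ring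
    · have hyn' : y = n := le_antisymm hy (by omega)
      have hny : (n - y : ℕ) = 0 := by omega
      rw [hny]
      simp only [Nat.cast_zero, zero_mul, mul_zero]
      split
      · next h =>
        have hn0 : n = 0 := by omega
        have : (n : ℝ) = 0 := by exact_mod_cast congrArg (Nat.cast : ℕ → ℝ) hn0
        rw [this]; ring
      · rfl
  rw [binomPMFDeriv, hA, hB]; ring

lemma bern_deriv_eval (n y : ℕ) (hy : y ≤ n) (x : ℝ) :
    ((bernsteinPolynomial ℝ n y).derivative).eval x = binomPMFDeriv n y x := by
  have hfun : (fun t : ℝ => (bernsteinPolynomial ℝ n y).eval t) = binomPMF n y :=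
    funext fun t => bern_eval n y t
  rw [← Polynomial.deriv, hfun, (binomPMF_hasDerivAt n y hy x).deriv]

lemma bern_combo (n j : ℕ) (hj : j ≤ n) :
    ∑ ν ∈ Finset.range (n + 1), Polynomial.C ((ν.choose j : ℝ)) * bernsteinPolynomial ℝ n ν
      = Polynomial.C ((n.choose j : ℝ)) * X ^ j := by
  have hsub : ∑ ν ∈ Finset.Ico j (n + 1), C ((ν.choose j : ℝ)) * bernsteinPolynomial ℝ n ν
      = ∑ ν ∈ Finset.range (n + 1), C ((ν.choose j : ℝ)) * bernsteinPolynomial ℝ n ν := by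
    apply Finset.sum_subset
    · intro ν hν
      simp only [Finset.mem_Ico, Finset.mem_range] at *
      omega
    · intro ν hν hν'
      simp only [Finset.mem_Ico, Finset.mem_range] at *
      have : ν < j := by omega
      rw [Nat.choose_eq_zero_of_lt this]; simp
  rw [← hsub, Finset.sum_Ico_eq_sum_range]
  have hterm : ∀ μ ∈ Finset.range (n + 1 - j),
      C (((j + μ).choose j : ℝ)) * bernsteinPolynomial ℝ n (j + μ)
      = C ((n.choose j : ℝ)) * X ^ j * bernsteinPolynomial ℝ (n - j) μ := by
    intro μ hμ
    simp only [Finset.mem_range] at hμ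
    have hle : j + μ ≤ n := by omega
    have hnat : n.choose (j + μ) * (j + μ).choose j = n.choose j * (n - j).choose μ := by
      have := Nat.choose_mul (n := n) (Nat.le_add_right j μ)
      simpa using this
    have hc : (((j + μ).choose j : ℝ)) * ((n.choose (j + μ) : ℝ))
        = ((n.choose j : ℝ)) * (((n - j).choose μ : ℝ)) := by
      rw [mul_comm]; exact_mod_cast congrArg (Nat.cast : ℕ → ℝ) hnat
    have hCc : (C (((j + μ).choose j : ℝ)) * C ((n.choose (j + μ) : ℝ)) : ℝ[X])
        = C ((n.choose j : ℝ)) * C (((n - j).choose μ : ℝ)) := by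
      rw [← C_mul, ← C_mul, hc]
    simp only [bernsteinPolynomial, ← Polynomial.C_eq_natCast]
    rw [Nat.sub_add_eq, pow_add]
    linear_combination ((X : ℝ[X]) ^ j * X ^ μ * (1 - X) ^ (n - j - μ)) * hCc
  have hrange : Finset.range (n + 1 - j) = Finset.range (n - j + 1) := by
    rw [Nat.sub_add_comm hj]
  rw [Finset.sum_congr rfl hterm, ← Finset.mul_sum, hrange,
    bernsteinPolynomial.sum ℝ (n - j), mul_one]

lemma bern_span (n : ℕ) (q : ℝ[X]) (hq : q.natDegree ≤ n) :
    ∃ c : Fin (n + 1) → ℝ,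
      ∑ ν : Fin (n + 1), c ν • bernsteinPolynomial ℝ n (ν : ℕ) = q := by
  set S : Submodule ℝ ℝ[X] :=
    Submodule.span ℝ (Set.range fun ν : Fin (n + 1) => bernsteinPolynomial ℝ n (ν : ℕ)) with hS
  have hbmem : ∀ ν ∈ Finset.range (n + 1), bernsteinPolynomial ℝ n ν ∈ S := by
    intro ν hν
    simp only [Finset.mem_range] at hν
    exact Submodule.subset_span ⟨⟨ν, hν⟩, rfl⟩
  have hXj : ∀ j ≤ n, (X : ℝ[X]) ^ j ∈ S := by
    intro j hj
    have hsum : ∑ ν ∈ Finset.range (n + 1), C ((ν.choose j : ℝ)) * bernsteinPolynomial ℝ n ν ∈ S :=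
      Submodule.sum_mem _ fun ν hν => by
        rw [← smul_eq_C_mul]; exact Submodule.smul_mem _ _ (hbmem ν hν)
    rw [bern_combo n j hj] at hsum
    have hc : ((n.choose j : ℝ)) ≠ 0 := by
      exact_mod_cast Nat.choose_pos hj |>.ne'
    have := Submodule.smul_mem S ((n.choose j : ℝ))⁻¹ hsum
    rwa [← smul_eq_C_mul, smul_smul, inv_mul_cancel₀ hc, one_smul] at this
  have hqS : q ∈ S := by
    have hrepr : q = ∑ j ∈ Finset.range (n + 1), C (q.coeff j) * X ^ j := by
      conv_lhs => rw [q.as_sum_range' (n + 1) (by omega)]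
      exact Finset.sum_congr rfl fun j _ => (C_mul_X_pow_eq_monomial).symm
    rw [hrepr]
    exact Submodule.sum_mem _ fun j hj => by
      rw [← smul_eq_C_mul]
      exact Submodule.smul_mem _ _ (hXj j (by simpa using Nat.lt_succ_iff.mp (Finset.mem_range.mp hj)))
  rwa [Submodule.mem_span_range_iff_exists_fun] at hqS

lemma deriv_eval_zero_of_sq_dvd {p : ℝ[X]} {a : ℝ} (h : (X - C a) ^ 2 ∣ p) :
    p.derivative.eval a = 0 := by
  obtain ⟨r, rfl⟩ := h
  simp [Polynomial.derivative_mul, Polynomial.derivative_pow]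

/-- First-order identifiability of binomial mixtures: if `1 ≤ K ≤ (n+1)/2`, the
θᵢ ∈ (0,1) are distinct, and the linear combination of the binomial pmfs and
their θ-derivatives vanishes on {0, …, n}, then all coefficients vanish. -/
theorem binomial_mixture_first_order_identifiable
    (n K : ℕ) (hn : 1 ≤ n) (θ : Fin K → ℝ)
    (hθ01 : ∀ i, θ i ∈ Set.Ioo (0 : ℝ) 1)
    (hθdist : Function.Injective θ)
    (hK1 : 1 ≤ K) (hK2 : 2 * K ≤ n + 1)
    (α β : Fin K → ℝ)
    (hvanish : ∀ y : ℕ, y ≤ n →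
      (∑ i, α i * binomPMF n y (θ i)) + (∑ i, β i * binomPMFDeriv n y (θ i)) = 0) :
    ∀ i, α i = 0 ∧ β i = 0 := by
  -- key functional: for all polynomials of degree ≤ n
  have func : ∀ q : ℝ[X], q.natDegree ≤ n →
      ∑ i, (α i * q.eval (θ i) + β i * q.derivative.eval (θ i)) = 0 := by
    intro q hq
    obtain ⟨c, hc⟩ := bern_span n q hq
    have heval : ∀ t : ℝ, q.eval t = ∑ ν : Fin (n + 1), c ν * binomPMF n (ν : ℕ) t := by
      intro t
      rw [← hc]
      simp [Polynomial.eval_finset_sum, bern_eval, smul_eq_mul]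
    have hdval : ∀ t : ℝ, q.derivative.eval t
        = ∑ ν : Fin (n + 1), c ν * binomPMFDeriv n (ν : ℕ) t := by
      intro t
      rw [← hc, Polynomial.derivative_sum]
      rw [Polynomial.eval_finset_sum]
      refine Finset.sum_congr rfl fun ν _ => ?_
      rw [Polynomial.derivative_smul, Polynomial.eval_smul, smul_eq_mul,
        bern_deriv_eval n ν (Nat.lt_succ_iff.mp ν.isLt) t]
    calc ∑ i, (α i * q.eval (θ i) + β i * q.derivative.eval (θ i))
        = ∑ i, ∑ ν : Fin (n + 1),
            (c ν * (α i * binomPMF n (ν : ℕ) (θ i)) + c ν * (β i * binomPMFDeriv n (ν : ℕ) (θ i))) := by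
          refine Finset.sum_congr rfl fun i _ => ?_
          rw [heval, hdval, Finset.mul_sum, Finset.mul_sum, ← Finset.sum_add_distrib]
          refine Finset.sum_congr rfl fun ν _ => by ring
      _ = ∑ ν : Fin (n + 1), c ν *
            ((∑ i, α i * binomPMF n (ν : ℕ) (θ i)) + ∑ i, β i * binomPMFDeriv n (ν : ℕ) (θ i)) := by
          rw [Finset.sum_comm]
          refine Finset.sum_congr rfl fun ν _ => ?_
          rw [Finset.sum_add_distrib, mul_add, Finset.mul_sum, Finset.mul_sum]
      _ = 0 := by
          refine Finset.sum_eq_zero fun ν _ => ?_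
          rw [hvanish (ν : ℕ) (Nat.lt_succ_iff.mp ν.isLt)]; ring
  intro i
  set qi : ℝ[X] := ∏ l ∈ Finset.univ.erase i, (X - C (θ l)) ^ 2 with hqi
  have hdeg : qi.natDegree ≤ 2 * (K - 1) := by
    calc qi.natDegree ≤ ∑ l ∈ Finset.univ.erase i, ((X - C (θ l)) ^ 2).natDegree :=
          Polynomial.natDegree_prod_le _ _
      _ ≤ ∑ l ∈ Finset.univ.erase i, 2 := by
          refine Finset.sum_le_sum fun l _ => ?_
          rw [Polynomial.natDegree_pow, Polynomial.natDegree_X_sub_C]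
      _ = 2 * (K - 1) := by
          rw [Finset.sum_const, smul_eq_mul, Finset.card_erase_of_mem (Finset.mem_univ i),
            Finset.card_univ, Fintype.card_fin, mul_comm]
  have hq0 : ∀ l, l ≠ i → qi.eval (θ l) = 0 := by
    intro l hl
    rw [hqi, Polynomial.eval_prod]
    exact Finset.prod_eq_zero (Finset.mem_erase.mpr ⟨hl, Finset.mem_univ l⟩) (by simp)
  have hqne : qi.eval (θ i) ≠ 0 := by
    rw [hqi, Polynomial.eval_prod]
    refine Finset.prod_ne_zero_iff.mpr fun l hl => ?_
    have : θ i ≠ θ l := fun h => (Finset.mem_erase.mp hl).1 (hθdist h).symm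
    simp only [Polynomial.eval_pow, Polynomial.eval_sub, Polynomial.eval_X, Polynomial.eval_C]
    exact pow_ne_zero _ (sub_ne_zero.mpr this)
  have hq'0 : ∀ l, l ≠ i → qi.derivative.eval (θ l) = 0 := by
    intro l hl
    exact deriv_eval_zero_of_sq_dvd
      (Finset.dvd_prod_of_mem _ (Finset.mem_erase.mpr ⟨hl, Finset.mem_univ l⟩))
  set ri : ℝ[X] := (X - C (θ i)) * qi with hri
  have hrdeg : ri.natDegree ≤ n := by
    calc ri.natDegree ≤ (X - C (θ i)).natDegree + qi.natDegree := Polynomial.natDegree_mul_le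
      _ ≤ 1 + 2 * (K - 1) := by rw [Polynomial.natDegree_X_sub_C]; omega
      _ ≤ n := by omega
  have hr' : ∀ t : ℝ, ri.derivative.eval t = qi.eval t + (t - θ i) * qi.derivative.eval t := by
    intro t
    rw [hri, Polynomial.derivative_mul]
    simp
  have hβ : β i = 0 := by
    have h0 := func ri hrdeg
    have hsingle : ∑ l, (α l * ri.eval (θ l) + β l * ri.derivative.eval (θ l))
        = β i * qi.eval (θ i) := by
      rw [Finset.sum_eq_single i]
      · rw [hri, Polynomial.eval_mul, hr' (θ i)]
        simp
      · intro l _ hl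
        rw [hri, Polynomial.eval_mul, hq0 l hl, hr' (θ l), hq0 l hl, hq'0 l hl]
        ring
      · intro h; exact absurd (Finset.mem_univ i) h
    rw [hsingle] at h0
    exact (mul_eq_zero.mp h0).resolve_right hqne
  have hα : α i = 0 := by
    have hqdeg : qi.natDegree ≤ n := le_trans hdeg (by omega)
    have h0 := func qi hqdeg
    have hsingle : ∑ l, (α l * qi.eval (θ l) + β l * qi.derivative.eval (θ l))
        = α i * qi.eval (θ i) := by
      rw [Finset.sum_eq_single i]
      · rw [hβ]; ring
      · intro l _ hl
        rw [hq0 l hl, hq'0 l hl]; ring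
      · intro h; exact absurd (Finset.mem_univ i) h
    rw [hsingle] at h0
    exact (mul_eq_zero.mp h0).resolve_right hqne
  exact ⟨hα, hβ⟩
end

section
/- Identifiability of binomial mixtures with bounded number of components: let n ≥ 1 and suppose ∑_{i=1}^K w_i f(y;θ_i,n) = ∑_{j=1}^{K'} w'_j f(y;θ'_j,n) for all y ∈ {0,…,n}, where K, K' ≤ (n+1)/2, the θ_i ∈ (0,1) are distinct, the θ'_j ∈ (0,1) are distinct, all weights are strictly positive and sum to 1 in each mixture. Then K = K' and there is a permutation σ of {1,…,K} with θ'_{σ(i)} = θ_i and w'_{σ(i)} = w_i for all i. -/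
/-- A signed combination of at most `n+1` point masses whose power moments up to
order `n` all vanish must be identically zero. -/
lemma moment_vanish (n : ℕ) (T : Finset ℝ) (hT : T.card ≤ n + 1) (c : ℝ → ℝ)
    (h : ∀ y ≤ n, ∑ t ∈ T, c t * t ^ y = 0) : ∀ t ∈ T, c t = 0 := by
  intro t ht
  have hinj : Set.InjOn (id : ℝ → ℝ) T := fun a _ b _ hab => hab
  set L := Lagrange.basis T id t with hL
  have hdeg : L.natDegree < n + 1 := by
    have := Lagrange.natDegree_basis hinj ht
    rw [hL, this]
    omega
  have h1 : ∑ s ∈ T, c s * L.eval s = c t := by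
    rw [← Finset.add_sum_erase _ _ ht]
    have he : (L.eval t : ℝ) = 1 := Lagrange.eval_basis_self hinj ht
    rw [he, mul_one]
    have : ∀ s ∈ T.erase t, c s * L.eval s = 0 := by
      intro s hs
      rcases Finset.mem_erase.mp hs with ⟨hst, hsT⟩
      have h0 : Polynomial.eval (id s) (Lagrange.basis T id t) = 0 :=
        Lagrange.eval_basis_of_ne (Ne.symm hst) hsT
      have h0' : Polynomial.eval s L = 0 := h0
      rw [h0', mul_zero]
    rw [Finset.sum_eq_zero this, add_zero]
  have h2 : ∑ s ∈ T, c s * L.eval s = 0 := by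
    have hev : ∀ s : ℝ, L.eval s = ∑ y ∈ Finset.range (n + 1), L.coeff y * s ^ y :=
      fun s => Polynomial.eval_eq_sum_range' hdeg s
    calc ∑ s ∈ T, c s * L.eval s
        = ∑ s ∈ T, ∑ y ∈ Finset.range (n + 1), L.coeff y * (c s * s ^ y) := by
          refine Finset.sum_congr rfl fun s _ => ?_
          rw [hev s, Finset.mul_sum]
          refine Finset.sum_congr rfl fun y _ => by ring
      _ = ∑ y ∈ Finset.range (n + 1), L.coeff y * ∑ s ∈ T, c s * s ^ y := by
          rw [Finset.sum_comm]
          refine Finset.sum_congr rfl fun y _ => (Finset.mul_sum _ _ _).symm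
      _ = 0 := by
          refine Finset.sum_eq_zero fun y hy => ?_
          rw [h y (Nat.lt_succ_iff.mp (Finset.mem_range.mp hy)), mul_zero]
  rw [h1] at h2
  exact h2

lemma fiber_sum {m : ℕ} {x : Fin m → ℝ} (hx : Function.Injective x) (a : Fin m → ℝ)
    (i0 : Fin m) : ∑ i, (if x i = x i0 then a i else 0) = a i0 := by
  rw [Finset.sum_eq_single i0]
  · simp
  · intro i _ hi
    rw [if_neg (fun hxi => hi (hx hxi))]
  · intro h; exact absurd (Finset.mem_univ i0) h

lemma exists_of_fiber_pos {m : ℕ} (x : Fin m → ℝ) (a : Fin m → ℝ) (t : ℝ)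
    (h : 0 < ∑ i, (if x i = t then a i else 0)) : ∃ i, x i = t := by
  by_contra hc
  push_neg at hc
  have : ∑ i, (if x i = t then a i else 0) = 0 :=
    Finset.sum_eq_zero fun i _ => if_neg (hc i)
  rw [this] at h; exact lt_irrefl _ h

/-- Injectivity of θ ↦ θ/(1-θ) on (0,1). -/
lemma phi_inj {s t : ℝ} (hs : s ∈ Set.Ioo (0:ℝ) 1) (ht : t ∈ Set.Ioo (0:ℝ) 1)
    (h : s / (1 - s) = t / (1 - t)) : s = t := by
  have hs1 : (1:ℝ) - s ≠ 0 := by rcases hs with ⟨_, h2⟩; intro hc; linarith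
  have ht1 : (1:ℝ) - t ≠ 0 := by rcases ht with ⟨_, h2⟩; intro hc; linarith
  field_simp at h
  nlinarith [h]

/-- Identifiability of binomial mixtures with the number of components bounded
by `(n+1)/2`: equal mixtures have the same number of components and the same
atoms and weights up to a permutation. -/
theorem binomial_mixture_identifiable
    (n : ℕ) (hn : 1 ≤ n) (K K' : ℕ)
    (hK : 2 * K ≤ n + 1) (hK' : 2 * K' ≤ n + 1)
    (w : Fin K → ℝ) (θ : Fin K → ℝ) (w' : Fin K' → ℝ) (θ' : Fin K' → ℝ)
    (hθ01 : ∀ i, θ i ∈ Set.Ioo (0 : ℝ) 1) (hθ'01 : ∀ j, θ' j ∈ Set.Ioo (0 : ℝ) 1)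
    (hθdist : Function.Injective θ) (hθ'dist : Function.Injective θ')
    (hwpos : ∀ i, 0 < w i) (hw'pos : ∀ j, 0 < w' j)
    (hwsum : ∑ i, w i = 1) (hw'sum : ∑ j, w' j = 1)
    (heq : ∀ y : ℕ, y ≤ n →
      ∑ i, w i * binomPMF n y (θ i) = ∑ j, w' j * binomPMF n y (θ' j)) :
    K = K' ∧ ∃ σ : Fin K → Fin K', Function.Bijective σ ∧
      ∀ i, θ' (σ i) = θ i ∧ w' (σ i) = w i := by
  -- transformed atoms and weights
  set x : Fin K → ℝ := fun i => θ i / (1 - θ i) with hxdef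
  set x' : Fin K' → ℝ := fun j => θ' j / (1 - θ' j) with hx'def
  set a : Fin K → ℝ := fun i => w i * (1 - θ i) ^ n with hadef
  set a' : Fin K' → ℝ := fun j => w' j * (1 - θ' j) ^ n with ha'def
  have h1θ : ∀ i, (0:ℝ) < 1 - θ i := fun i => by have := (hθ01 i).2; linarith
  have h1θ' : ∀ j, (0:ℝ) < 1 - θ' j := fun j => by have := (hθ'01 j).2; linarith
  have hapos : ∀ i, 0 < a i := fun i => mul_pos (hwpos i) (pow_pos (h1θ i) n)
  have ha'pos : ∀ j, 0 < a' j := fun j => mul_pos (hw'pos j) (pow_pos (h1θ' j) n)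
  have hxinj : Function.Injective x := by
    intro i i' h
    exact hθdist (phi_inj (hθ01 i) (hθ01 i') h)
  have hx'inj : Function.Injective x' := by
    intro j j' h
    exact hθ'dist (phi_inj (hθ'01 j) (hθ'01 j') h)
  -- key pointwise identity
  have hkey : ∀ (t : ℝ), t ∈ Set.Ioo (0:ℝ) 1 → ∀ (u : ℝ) (y : ℕ), y ≤ n →
      u * binomPMF n y t = (n.choose y : ℝ) * ((u * (1 - t) ^ n) * (t / (1 - t)) ^ y) := by
    intro t ht u y hy
    have h1t : (0:ℝ) < 1 - t := by have := ht.2; linarith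
    have hpow : (1 - t) ^ n = (1 - t) ^ y * (1 - t) ^ (n - y) := by
      rw [← pow_add]
      congr 1
      omega
    rw [binomPMF, div_pow, hpow]
    field_simp
  -- moment equalities for the transformed atoms
  have hmom : ∀ y ≤ n, ∑ i, a i * x i ^ y = ∑ j, a' j * x' j ^ y := by
    intro y hy
    have h := heq y hy
    have hc : (0:ℝ) < (n.choose y : ℝ) := by
      exact_mod_cast Nat.choose_pos hy
    have hl : ∑ i, w i * binomPMF n y (θ i)
        = (n.choose y : ℝ) * ∑ i, a i * x i ^ y := by
      rw [Finset.mul_sum]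
      exact Finset.sum_congr rfl fun i _ => hkey (θ i) (hθ01 i) (w i) y hy
    have hr : ∑ j, w' j * binomPMF n y (θ' j)
        = (n.choose y : ℝ) * ∑ j, a' j * x' j ^ y := by
      rw [Finset.mul_sum]
      exact Finset.sum_congr rfl fun j _ => hkey (θ' j) (hθ'01 j) (w' j) y hy
    rw [hl, hr] at h
    exact mul_left_cancel₀ (ne_of_gt hc) h
  -- the combined support
  set T : Finset ℝ := (Finset.univ.image x) ∪ (Finset.univ.image x') with hTdef
  have hTcard : T.card ≤ n + 1 := by
    calc T.card ≤ (Finset.univ.image x).card + (Finset.univ.image x').card :=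
          Finset.card_union_le _ _
      _ ≤ K + K' := by
          have h1 : (Finset.univ.image x).card ≤ K :=
            le_trans Finset.card_image_le (by simp)
          have h2 : (Finset.univ.image x').card ≤ K' :=
            le_trans Finset.card_image_le (by simp)
          omega
      _ ≤ n + 1 := by omega
  set A : ℝ → ℝ := fun t => ∑ i, (if x i = t then a i else 0) with hAdef
  set B : ℝ → ℝ := fun t => ∑ j, (if x' j = t then a' j else 0) with hBdef
  have hsumA : ∀ y : ℕ, ∑ t ∈ T, A t * t ^ y = ∑ i, a i * x i ^ y := by
    intro y
    calc ∑ t ∈ T, A t * t ^ y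
        = ∑ t ∈ T, ∑ i, (if x i = t then a i * x i ^ y else 0) := by
          refine Finset.sum_congr rfl fun t ht => ?_
          rw [hAdef]
          simp only [Finset.sum_mul, ite_mul, zero_mul]
          refine Finset.sum_congr rfl fun i _ => ?_
          by_cases h : x i = t
          · rw [if_pos h, if_pos h, h]
          · rw [if_neg h, if_neg h]
      _ = ∑ i, ∑ t ∈ T, (if x i = t then a i * x i ^ y else 0) := Finset.sum_comm
      _ = ∑ i, a i * x i ^ y := by
          refine Finset.sum_congr rfl fun i _ => ?_
          rw [Finset.sum_ite_eq T (x i) (fun _ => a i * x i ^ y)]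
          rw [if_pos]
          exact Finset.mem_union_left _ (Finset.mem_image_of_mem x (Finset.mem_univ i))
  have hsumB : ∀ y : ℕ, ∑ t ∈ T, B t * t ^ y = ∑ j, a' j * x' j ^ y := by
    intro y
    calc ∑ t ∈ T, B t * t ^ y
        = ∑ t ∈ T, ∑ j, (if x' j = t then a' j * x' j ^ y else 0) := by
          refine Finset.sum_congr rfl fun t ht => ?_
          rw [hBdef]
          simp only [Finset.sum_mul, ite_mul, zero_mul]
          refine Finset.sum_congr rfl fun j _ => ?_
          by_cases h : x' j = t
          · rw [if_pos h, if_pos h, h]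
          · rw [if_neg h, if_neg h]
      _ = ∑ j, ∑ t ∈ T, (if x' j = t then a' j * x' j ^ y else 0) := Finset.sum_comm
      _ = ∑ j, a' j * x' j ^ y := by
          refine Finset.sum_congr rfl fun j _ => ?_
          rw [Finset.sum_ite_eq T (x' j) (fun _ => a' j * x' j ^ y)]
          rw [if_pos]
          exact Finset.mem_union_right _ (Finset.mem_image_of_mem x' (Finset.mem_univ j))
  have hAB : ∀ t ∈ T, A t = B t := by
    intro t ht
    have := moment_vanish n T hTcard (fun t => A t - B t)
      (by
        intro y hy
        have : ∑ t ∈ T, (A t - B t) * t ^ y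
            = ∑ t ∈ T, A t * t ^ y - ∑ t ∈ T, B t * t ^ y := by
          rw [← Finset.sum_sub_distrib]
          exact Finset.sum_congr rfl fun t _ => by ring
        rw [this, hsumA y, hsumB y, hmom y hy, sub_self]) t ht
    have h0 : A t - B t = 0 := this
    linarith [h0]
  -- matching from left to right
  have hmatchL : ∀ i : Fin K, ∃ j : Fin K', θ' j = θ i ∧ w' j = w i := by
    intro i
    have hmem : x i ∈ T :=
      Finset.mem_union_left _ (Finset.mem_image_of_mem x (Finset.mem_univ i))
    have hA : A (x i) = a i := fiber_sum hxinj a i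
    have hB : 0 < B (x i) := by
      rw [← hAB (x i) hmem, hA]; exact hapos i
    obtain ⟨j, hj⟩ := exists_of_fiber_pos x' a' (x i) hB
    refine ⟨j, ?_, ?_⟩
    · exact (phi_inj (hθ'01 j) (hθ01 i) hj)
    · have hθeq : θ' j = θ i := phi_inj (hθ'01 j) (hθ01 i) hj
      have hBval : B (x i) = a' j := by
        rw [hBdef]
        have : x i = x' j := hj.symm
        rw [this]
        exact fiber_sum hx'inj a' j
      have : a' j = a i := by rw [← hBval, ← hAB (x i) hmem, hA]
      rw [hadef, ha'def] at this
      simp only at this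
      rw [hθeq] at this
      exact mul_right_cancel₀ (ne_of_gt (pow_pos (h1θ i) n)) this
  have hmatchR : ∀ j : Fin K', ∃ i : Fin K, θ i = θ' j := by
    intro j
    have hmem : x' j ∈ T :=
      Finset.mem_union_right _ (Finset.mem_image_of_mem x' (Finset.mem_univ j))
    have hB : B (x' j) = a' j := fiber_sum hx'inj a' j
    have hA : 0 < A (x' j) := by
      rw [hAB (x' j) hmem, hB]; exact ha'pos j
    obtain ⟨i, hi⟩ := exists_of_fiber_pos x a (x' j) hA
    exact ⟨i, phi_inj (hθ01 i) (hθ'01 j) hi⟩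
  choose σ hσθ hσw using hmatchL
  choose τ hτθ using hmatchR
  have hσinj : Function.Injective σ := by
    intro i i' h
    apply hθdist
    rw [← hσθ i, ← hσθ i', h]
  have hτinj : Function.Injective τ := by
    intro j j' h
    apply hθ'dist
    rw [← hτθ j, ← hτθ j', h]
  have hcard : K = K' := by
    have h1 : K ≤ K' := by
      have := Fintype.card_le_of_injective σ hσinj
      simpa using this
    have h2 : K' ≤ K := by
      have := Fintype.card_le_of_injective τ hτinj
      simpa using this
    omega
  refine ⟨hcard, σ, ?_, fun i => ⟨hσθ i, hσw i⟩⟩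
  rw [Fintype.bijective_iff_injective_and_card]
  exact ⟨hσinj, by simp [hcard]⟩
end

section
/- If polynomials in e^t vanish identically, coefficients vanish: suppose θ₁,…,θ_K ∈ (0,1) are distinct and α_i, β_i ∈ ℝ satisfy ∑_{i=1}^K [α_i (1−θ_i+θ_i e^t)^n + β_i n (e^t−1)(1−θ_i+θ_i e^t)^{n−1}] = 0 for all t ∈ ℝ, with n ≥ 2K − 1. Then all α_i = β_i = 0. -/
open Polynomial Finset in
private lemma single_n (n : ℕ) (y : ℝ) (h : ℝ[X]) (hh : h.natDegree ≤ n) :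
    ∑ r ∈ Finset.range (n+1), (h.coeff r * r.factorial * (n-r).factorial) *
      ((X + C y)^n).coeff (n-r) = n.factorial * h.eval y := by
  rw [eval_eq_sum_range' (lt_of_le_of_lt hh (Nat.lt_succ_self n)), Finset.mul_sum]
  apply Finset.sum_congr rfl
  intro r hr
  rw [Finset.mem_range] at hr
  have hrn : r ≤ n := Nat.lt_succ_iff.mp hr
  rw [coeff_X_add_C_pow, Nat.sub_sub_self hrn, Nat.choose_symm hrn]
  have h2 : ((n.choose r : ℝ)) * r.factorial * (n-r).factorial = n.factorial := by
    exact_mod_cast congrArg (Nat.cast (R := ℝ)) (Nat.choose_mul_factorial_mul_factorial hrn)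
  linear_combination (h.coeff r * y ^ r) * h2

open Polynomial Finset in
private lemma single_pred (n : ℕ) (hn : 1 ≤ n) (y : ℝ) (h : ℝ[X]) (hh : h.natDegree ≤ n) :
    ∑ r ∈ Finset.range (n+1), (h.coeff r * r.factorial * (n-r).factorial) *
      ((X + C y)^(n-1)).coeff (n-r) = (n-1).factorial * (Polynomial.derivative h).eval y := by
  have hd : (Polynomial.derivative h).natDegree < n :=
    lt_of_le_of_lt (Polynomial.natDegree_derivative_le h) (by omega)
  rw [eval_eq_sum_range' hd, Finset.mul_sum, Finset.sum_range_succ']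
  have hzero : (h.coeff 0 * (0:ℕ).factorial * (n-0).factorial) *
      ((X + C y)^(n-1)).coeff (n-0) = 0 := by
    rw [coeff_X_add_C_pow, Nat.choose_eq_zero_of_lt (by omega)]
    simp
  rw [hzero, add_zero]
  apply Finset.sum_congr rfl
  intro k hk
  rw [Finset.mem_range] at hk
  have h3 : k ≤ n - 1 := by omega
  have e1 : n - (k+1) = n - 1 - k := by omega
  rw [coeff_derivative, coeff_X_add_C_pow, e1, Nat.sub_sub_self h3, Nat.choose_symm h3]
  have h4 : (((n-1).choose k : ℝ)) * k.factorial * ((n-1)-k).factorial = (n-1).factorial := by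
    exact_mod_cast congrArg (Nat.cast (R := ℝ)) (Nat.choose_mul_factorial_mul_factorial h3)
  have h5 : ((k+1).factorial : ℝ) = ((k:ℝ)+1) * k.factorial := by
    rw [Nat.factorial_succ]; push_cast; ring
  rw [h5]
  linear_combination (h.coeff (k+1) * ((k:ℝ)+1) * y^k) * h4

open Polynomial Finset in
private lemma master (K n : ℕ) (hn1 : 1 ≤ n) (y A B : Fin K → ℝ)
    (hP : (∑ i, (C (A i) * (X + C (y i))^n + C (B i) * (X + C (y i))^(n-1)) : ℝ[X]) = 0)
    (h : ℝ[X]) (hh : h.natDegree ≤ n) :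
    ∑ i, (A i * n.factorial * h.eval (y i)
      + B i * (n-1).factorial * (Polynomial.derivative h).eval (y i)) = 0 := by
  have hco : ∀ m, (∑ i, (C (A i) * (X + C (y i))^n + C (B i) * (X + C (y i))^(n-1)) : ℝ[X]).coeff m
      = ∑ i, (A i * ((X + C (y i))^n).coeff m + B i * ((X + C (y i))^(n-1)).coeff m) := by
    intro m
    rw [Polynomial.finset_sum_coeff]
    exact Finset.sum_congr rfl (fun i _ => by simp [coeff_C_mul])
  have hc : ∀ m, (∑ i, (C (A i) * (X + C (y i))^n + C (B i) * (X + C (y i))^(n-1)) : ℝ[X]).coeff m = 0 := by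
    intro m; rw [hP]; simp
  have expand : ∀ i : Fin K, A i * (n.factorial : ℝ) * h.eval (y i)
      + B i * ((n-1).factorial : ℝ) * (Polynomial.derivative h).eval (y i)
      = ∑ r ∈ Finset.range (n+1), ((h.coeff r * r.factorial * (n-r).factorial) *
          (A i * ((X + C (y i))^n).coeff (n-r) + B i * ((X + C (y i))^(n-1)).coeff (n-r))) := by
    intro i
    calc A i * (n.factorial : ℝ) * h.eval (y i)
        + B i * ((n-1).factorial : ℝ) * (Polynomial.derivative h).eval (y i)
        = A i * ((n.factorial : ℝ) * h.eval (y i))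
          + B i * (((n-1).factorial : ℝ) * (Polynomial.derivative h).eval (y i)) := by ring
      _ = A i * (∑ r ∈ Finset.range (n+1), (h.coeff r * r.factorial * (n-r).factorial) *
            ((X + C (y i))^n).coeff (n-r))
          + B i * (∑ r ∈ Finset.range (n+1), (h.coeff r * r.factorial * (n-r).factorial) *
            ((X + C (y i))^(n-1)).coeff (n-r)) := by
          rw [single_n n (y i) h hh, single_pred n hn1 (y i) h hh]
      _ = _ := by
          rw [Finset.mul_sum, Finset.mul_sum, ← Finset.sum_add_distrib]
          exact Finset.sum_congr rfl (fun r _ => by ring)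
  calc ∑ i, (A i * (n.factorial : ℝ) * h.eval (y i)
      + B i * ((n-1).factorial : ℝ) * (Polynomial.derivative h).eval (y i))
      = ∑ i, ∑ r ∈ Finset.range (n+1), ((h.coeff r * r.factorial * (n-r).factorial) *
          (A i * ((X + C (y i))^n).coeff (n-r) + B i * ((X + C (y i))^(n-1)).coeff (n-r))) :=
        Finset.sum_congr rfl (fun i _ => expand i)
    _ = ∑ r ∈ Finset.range (n+1), ∑ i, ((h.coeff r * r.factorial * (n-r).factorial) *
          (A i * ((X + C (y i))^n).coeff (n-r) + B i * ((X + C (y i))^(n-1)).coeff (n-r))) :=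
        by rw [Finset.sum_comm]
    _ = 0 := by
        apply Finset.sum_eq_zero
        intro r _
        rw [← Finset.mul_sum, ← hco (n-r), hc (n-r), mul_zero]

open Polynomial Finset in
private lemma key (K n : ℕ) (hn : 2 * K - 1 ≤ n) (hK : 0 < K) (y A B : Fin K → ℝ)
    (hy : Function.Injective y)
    (hP : (∑ i, (C (A i) * (X + C (y i))^n + C (B i) * (X + C (y i))^(n-1)) : ℝ[X]) = 0) :
    ∀ j, A j = 0 ∧ B j = 0 := by
  have hn1 : 1 ≤ n := by omega
  -- per-j data
  set p : Fin K → ℝ[X] := fun j => ∏ k ∈ Finset.univ.erase j, (X - C (y k)) with hp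
  have hw : ∀ j : Fin K, (p j).eval (y j) = ∏ k ∈ Finset.univ.erase j, (y j - y k) := by
    intro j; simp [hp, eval_prod]
  have hwne : ∀ j : Fin K, (p j).eval (y j) ≠ 0 := by
    intro j
    rw [hw j]
    apply Finset.prod_ne_zero_iff.mpr
    intro k hk
    exact sub_ne_zero.mpr (fun hcon => (Finset.ne_of_mem_erase hk) (hy hcon.symm))
  have hpz : ∀ j i : Fin K, i ≠ j → (p j).eval (y i) = 0 := by
    intro j i hij
    rw [hp]
    simp only [eval_prod]
    exact Finset.prod_eq_zero (Finset.mem_erase.mpr ⟨hij, Finset.mem_univ i⟩) (by simp)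
  have hpdeg : ∀ j : Fin K, (p j).natDegree ≤ K - 1 := by
    intro j
    refine le_trans (Polynomial.natDegree_prod_le _ _) ?_
    have : ∀ k ∈ Finset.univ.erase j, (X - C (y k)).natDegree = 1 :=
      fun k _ => natDegree_X_sub_C (y k)
    rw [Finset.sum_congr rfl this, Finset.sum_const, smul_eq_mul, mul_one,
      Finset.card_erase_of_mem (Finset.mem_univ j), Finset.card_univ, Fintype.card_fin]
  have hqdeg : ∀ j : Fin K, ((p j)^2).natDegree ≤ 2 * (K - 1) :=
    fun j => le_trans (Polynomial.natDegree_pow_le) (by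
      have := hpdeg j; omega)
  have hqz : ∀ j i : Fin K, i ≠ j → ((p j)^2).eval (y i) = 0 := by
    intro j i hij; rw [eval_pow, hpz j i hij]; ring
  have hdqz : ∀ j i : Fin K, i ≠ j → (Polynomial.derivative ((p j)^2)).eval (y i) = 0 := by
    intro j i hij
    rw [Polynomial.derivative_pow]
    simp [hpz j i hij]
  -- Step 1: B j = 0
  have hB : ∀ j, B j = 0 := by
    intro j
    have hdeg : ((X - C (y j)) * (p j)^2).natDegree ≤ n := by
      refine le_trans (Polynomial.natDegree_mul_le) ?_
      have := hqdeg j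
      rw [natDegree_X_sub_C]
      omega
    have hm := master K n hn1 y A B hP ((X - C (y j)) * (p j)^2) hdeg
    have heval : ∀ i : Fin K, ((X - C (y j)) * (p j)^2).eval (y i) = 0 := by
      intro i
      by_cases hij : i = j
      · subst hij; simp
      · rw [eval_mul, hqz j i hij, mul_zero]
    have hder : Polynomial.derivative ((X - C (y j)) * (p j)^2)
        = (p j)^2 + (X - C (y j)) * Polynomial.derivative ((p j)^2) := by
      rw [Polynomial.derivative_mul, Polynomial.derivative_X_sub_C, one_mul]
    have hdeval : ∀ i : Fin K, i ≠ j →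
        (Polynomial.derivative ((X - C (y j)) * (p j)^2)).eval (y i) = 0 := by
      intro i hij
      rw [hder, eval_add, eval_mul, hqz j i hij, hdqz j i hij, mul_zero, add_zero]
    have hdevalj : (Polynomial.derivative ((X - C (y j)) * (p j)^2)).eval (y j)
        = ((p j).eval (y j))^2 := by
      rw [hder, eval_add, eval_mul, eval_pow]
      simp
    rw [Finset.sum_eq_single j (fun i _ hij => by
        rw [heval i, hdeval i hij, mul_zero, mul_zero, add_zero])
      (fun hj => absurd (Finset.mem_univ j) hj)] at hm
    rw [heval j, hdevalj, mul_zero, zero_add] at hm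
    have hfac : ((n-1).factorial : ℝ) ≠ 0 := Nat.cast_ne_zero.mpr (Nat.factorial_ne_zero _)
    have hsq : ((p j).eval (y j))^2 ≠ 0 := pow_ne_zero _ (hwne j)
    rcases mul_eq_zero.mp hm with h1 | h1
    · rcases mul_eq_zero.mp h1 with h2 | h2
      · exact h2
      · exact absurd h2 hfac
    · exact absurd h1 hsq
  -- Step 2: A j = 0
  intro j
  refine ⟨?_, hB j⟩
  have hdeg : ((p j)^2).natDegree ≤ n := le_trans (hqdeg j) (by omega)
  have hm := master K n hn1 y A B hP ((p j)^2) hdeg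
  simp only [hB, zero_mul, add_zero] at hm
  rw [Finset.sum_eq_single j (fun i _ hij => by rw [hqz j i hij, mul_zero])
    (fun hj => absurd (Finset.mem_univ j) hj)] at hm
  have hfac : (n.factorial : ℝ) ≠ 0 := Nat.cast_ne_zero.mpr (Nat.factorial_ne_zero _)
  have hsq : ((p j)^2).eval (y j) ≠ 0 := by
    rw [eval_pow]; exact pow_ne_zero _ (hwne j)
  rcases mul_eq_zero.mp hm with h1 | h1
  · rcases mul_eq_zero.mp h1 with h2 | h2
    · exact h2
    · exact absurd h2 hfac
  · exact absurd h1 hsq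

open Polynomial Finset in
/-- If the combination `∑ᵢ [αᵢ(1−θᵢ+θᵢeᵗ)ⁿ + βᵢ n (eᵗ−1)(1−θᵢ+θᵢeᵗ)^{n−1}]`
vanishes for all `t ∈ ℝ`, with distinct `θᵢ ∈ (0,1)` and `n ≥ 2K − 1`, then all
coefficients `αᵢ, βᵢ` vanish. -/
theorem exp_polynomial_vanish_coeffs_zero
    (K n : ℕ) (hn : 2 * K - 1 ≤ n)
    (θ : Fin K → ℝ) (hθ01 : ∀ i, θ i ∈ Set.Ioo (0 : ℝ) 1)
    (hθdist : Function.Injective θ)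
    (α β : Fin K → ℝ)
    (hvanish : ∀ t : ℝ,
      ∑ i, (α i * (1 - θ i + θ i * Real.exp t) ^ n
        + β i * (n : ℝ) * (Real.exp t - 1) * (1 - θ i + θ i * Real.exp t) ^ (n - 1)) = 0) :
    ∀ i, α i = 0 ∧ β i = 0 := by
  intro i0
  have hK : 0 < K := i0.pos
  have hn1 : 1 ≤ n := by omega
  have hθpos : ∀ i, 0 < θ i := fun i => (hθ01 i).1
  have hθlt : ∀ i, θ i < 1 := fun i => (hθ01 i).2
  have hθne : ∀ i, θ i ≠ 0 := fun i => ne_of_gt (hθpos i)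
  have hyinj : Function.Injective (fun i => (1 - θ i) / θ i) := by
    intro a b hab
    apply hθdist
    have e : ∀ i : Fin K, θ i * ((1 - θ i) / θ i) = 1 - θ i := by
      intro i; rw [mul_div_assoc']; exact mul_div_cancel_left₀ _ (hθne i)
    have key1 : ∀ i : Fin K, θ i * (1 + (1 - θ i) / θ i) = 1 := by
      intro i; rw [mul_add, mul_one, e i]; ring
    have hab' : (1 - θ a) / θ a = (1 - θ b) / θ b := hab
    have h1 : θ a * (1 + (1 - θ a) / θ a) = θ b * (1 + (1 - θ a) / θ a) := by
      have h0 := (key1 a).trans (key1 b).symm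
      rw [← hab'] at h0
      exact h0
    have hpos : (0:ℝ) < 1 + (1 - θ a) / θ a := by
      have : 0 < (1 - θ a) / θ a := div_pos (by linarith [hθlt a]) (hθpos a)
      linarith
    exact mul_right_cancel₀ (ne_of_gt hpos) h1
  have per : ∀ (i : Fin K) (x : ℝ),
      (α i * θ i ^ n + (n : ℝ) * β i * θ i ^ (n-1)) * (x + (1 - θ i) / θ i)^n
        + (-((n : ℝ) * β i * θ i ^ (n-1) / θ i)) * (x + (1 - θ i) / θ i)^(n-1)
      = α i * (1 - θ i + θ i * x) ^ n
        + β i * (n : ℝ) * (x - 1) * (1 - θ i + θ i * x) ^ (n - 1) := by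
    intro i x
    have e : θ i * ((1 - θ i) / θ i) = 1 - θ i := by
      rw [mul_div_assoc']; exact mul_div_cancel_left₀ _ (hθne i)
    have hx1 : 1 - θ i + θ i * x = θ i * (x + (1 - θ i) / θ i) := by
      rw [mul_add, e]; ring
    have hxy : x - 1 = (x + (1 - θ i) / θ i) - 1 / θ i := by
      rw [add_sub_assoc, div_sub_div_same,
        show (1 - θ i) - 1 = -θ i by ring, neg_div, div_self (hθne i)]
      ring
    have hsp : (x + (1 - θ i) / θ i)^n
        = (x + (1 - θ i) / θ i) * (x + (1 - θ i) / θ i)^(n-1) := by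
      conv_lhs => rw [show n = (n-1)+1 by omega]
      rw [pow_succ]; ring
    have htp : (θ i)^n = θ i * (θ i)^(n-1) := by
      conv_lhs => rw [show n = (n-1)+1 by omega]
      rw [pow_succ]; ring
    rw [hx1, hxy, mul_pow, mul_pow, hsp, htp]
    ring
  have hP : (∑ i, (C (α i * θ i ^ n + (n : ℝ) * β i * θ i ^ (n-1))
      * (X + C ((1 - θ i) / θ i))^n
      + C (-((n : ℝ) * β i * θ i ^ (n-1) / θ i))
      * (X + C ((1 - θ i) / θ i))^(n-1)) : ℝ[X]) = 0 := by
    apply Polynomial.eq_zero_of_infinite_isRoot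
    apply Set.Infinite.mono ?_ (Set.infinite_range_of_injective Real.exp_injective)
    rintro x ⟨t, rfl⟩
    show Polynomial.IsRoot _ (Real.exp t)
    have heval : (∑ i, (C (α i * θ i ^ n + (n : ℝ) * β i * θ i ^ (n-1))
        * (X + C ((1 - θ i) / θ i))^n
        + C (-((n : ℝ) * β i * θ i ^ (n-1) / θ i))
        * (X + C ((1 - θ i) / θ i))^(n-1)) : ℝ[X]).eval (Real.exp t)
        = ∑ i, ((α i * θ i ^ n + (n : ℝ) * β i * θ i ^ (n-1)) * (Real.exp t + (1 - θ i) / θ i)^n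
          + (-((n : ℝ) * β i * θ i ^ (n-1) / θ i)) * (Real.exp t + (1 - θ i) / θ i)^(n-1)) := by
      rw [Polynomial.eval_finset_sum]
      exact Finset.sum_congr rfl (fun i _ => by simp)
    rw [Polynomial.IsRoot, heval,
      Finset.sum_congr rfl (fun i _ => per i (Real.exp t))]
    exact hvanish t
  obtain ⟨hA0, hB0⟩ := key K n hn hK (fun i => (1 - θ i) / θ i)
    (fun i => α i * θ i ^ n + (n : ℝ) * β i * θ i ^ (n-1))
    (fun i => -((n : ℝ) * β i * θ i ^ (n-1) / θ i)) hyinj hP i0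
  have hnne : (n : ℝ) ≠ 0 := Nat.cast_ne_zero.mpr (by omega)
  have hpne : θ i0 ^ (n-1) ≠ 0 := pow_ne_zero _ (hθne i0)
  have hβ : β i0 = 0 := by
    have h1 : (n : ℝ) * β i0 * θ i0 ^ (n-1) / θ i0 = 0 := by
      have := hB0
      linarith [this]
    have h2 : (n : ℝ) * β i0 * θ i0 ^ (n-1) = 0 :=
      (div_eq_zero_iff.mp h1).resolve_right (hθne i0)
    exact (mul_eq_zero.mp ((mul_eq_zero.mp h2).resolve_right hpne)).resolve_left hnne
  refine ⟨?_, hβ⟩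
  have h5 : α i0 * θ i0 ^ n = 0 := by
    have := hA0
    simp only [hβ] at this
    simpa using this
  exact (mul_eq_zero.mp h5).resolve_right (pow_ne_zero _ (hθne i0))
end

section
/- Matching of mixture atoms from small Wasserstein distance: let θ₁,…,θ_K ∈ ℝ^d with pairwise distances at least Δ > 0, let w₀ ∈ Δ_{K-1} have all entries ≥ w_min > 0, and let (θ'₁,…,θ'_K, w') be another configuration. If there exists a coupling q of w' and w₀ (i.e., q_{ij} ≥ 0, ∑_j q_{ij} = w'_i, ∑_i q_{ij} = w₀_j) with ∑_{i,j} q_{ij} ‖θ'_i − θ_j‖₂ ≤ ε where ε < w_min · Δ/2, then there is a permutation σ of {1,…,K} such that ‖θ'_{σ(j)} − θ_j‖₂ ≤ ε/(w₀_j/2) ≤ 2ε/w_min for every j. -/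
open Finset

/-- Matching of mixture atoms from small Wasserstein (transport) distance:
if a coupling of the weight vectors transports `w'` to `w₀` with total cost at
most `ε < w_min Δ/2`, where the true atoms are `Δ`-separated and all true
weights are at least `w_min`, then there is a permutation matching every true
atom to a perturbed atom within `2ε/w₀_j ≤ 2ε/w_min`. -/
theorem mixture_atom_matching
    {d K : ℕ} (θ θ' : Fin K → EuclideanSpace ℝ (Fin d))
    (Δ : ℝ) (hΔ : 0 < Δ)
    (hsep : ∀ i j, i ≠ j → Δ ≤ ‖θ i - θ j‖)
    (w₀ w' : Fin K → ℝ) (wmin : ℝ) (hwmin : 0 < wmin)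
    (hw₀ : ∀ j, wmin ≤ w₀ j) (hw₀sum : ∑ j, w₀ j = 1)
    (hw'pos : ∀ i, 0 ≤ w' i) (hw'sum : ∑ i, w' i = 1)
    (q : Fin K → Fin K → ℝ) (hqpos : ∀ i j, 0 ≤ q i j)
    (hrow : ∀ i, ∑ j, q i j = w' i) (hcol : ∀ j, ∑ i, q i j = w₀ j)
    (ε : ℝ) (hε : 0 ≤ ε)
    (hcost : ∑ i, ∑ j, q i j * ‖θ' i - θ j‖ ≤ ε)
    (hεsmall : ε < wmin * Δ / 2) :
    ∃ σ : Equiv.Perm (Fin K), ∀ j,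
      ‖θ' (σ j) - θ j‖ ≤ ε / (w₀ j / 2) ∧ ε / (w₀ j / 2) ≤ 2 * ε / wmin := by
  have hw₀pos : ∀ j, 0 < w₀ j := fun j => lt_of_lt_of_le hwmin (hw₀ j)
  have hw₀ne : ∀ j, w₀ j ≠ 0 := fun j => (hw₀pos j).ne'
  -- column cost bound
  have hcol_le : ∀ j, ∑ i, q i j * ‖θ' i - θ j‖ ≤ ε := by
    intro j
    refine le_trans (Finset.sum_le_sum fun i _ => ?_) hcost
    exact Finset.single_le_sum (f := fun j' => q i j' * ‖θ' i - θ j'‖)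
      (fun j' _ => mul_nonneg (hqpos i j') (norm_nonneg _)) (mem_univ j)
  -- key: for each j find a close atom
  have key : ∀ j, ∃ i, ‖θ' i - θ j‖ ≤ 2 * ε / w₀ j ∧ ‖θ' i - θ j‖ < Δ / 2 := by
    intro j
    rcases eq_or_lt_of_le hε with hε0 | hεpos
    · -- ε = 0 : every transported distance with positive mass is 0
      have htot : ∑ i, ∑ j, q i j * ‖θ' i - θ j‖ = 0 := by
        refine le_antisymm (hε0 ▸ hcost) ?_
        exact Finset.sum_nonneg fun i _ => Finset.sum_nonneg fun j' _ =>
          mul_nonneg (hqpos i j') (norm_nonneg _)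
      have hzero : ∀ i j', q i j' * ‖θ' i - θ j'‖ = 0 := by
        intro i j'
        have h1 := (Finset.sum_eq_zero_iff_of_nonneg
          (fun i _ => Finset.sum_nonneg fun j' _ =>
            mul_nonneg (hqpos i j') (norm_nonneg _))).mp htot i (mem_univ i)
        exact (Finset.sum_eq_zero_iff_of_nonneg
          (fun j' _ => mul_nonneg (hqpos i j') (norm_nonneg _))).mp h1 j' (mem_univ j')
      -- find i with q i j > 0
      have : ∃ i, 0 < q i j := by
        by_contra h
        push_neg at h
        have : ∑ i, q i j = 0 :=
          Finset.sum_eq_zero fun i _ => le_antisymm (h i) (hqpos i j)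
        rw [hcol j] at this
        exact (hw₀pos j).ne' this
      obtain ⟨i, hi⟩ := this
      have hn : ‖θ' i - θ j‖ = 0 := by
        have := hzero i j
        rcases mul_eq_zero.mp this with h | h
        · exact absurd h hi.ne'
        · exact h
      refine ⟨i, ?_, ?_⟩
      · rw [hn]; exact div_nonneg (by linarith) (hw₀pos j).le
      · rw [hn]; linarith
    · -- ε > 0
      by_contra hno
      push_neg at hno
      have hcle : ∀ i, min (2 * ε / w₀ j) (Δ / 2) ≤ ‖θ' i - θ j‖ := by
        intro i
        by_cases hle : ‖θ' i - θ j‖ ≤ 2 * ε / w₀ j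
        · exact le_trans (min_le_right _ _) (hno i hle)
        · exact le_trans (min_le_left _ _) (le_of_not_ge hle)
      have hlb : w₀ j * min (2 * ε / w₀ j) (Δ / 2) ≤ ε := by
        calc w₀ j * min (2 * ε / w₀ j) (Δ / 2)
            = (∑ i, q i j) * min (2 * ε / w₀ j) (Δ / 2) := by rw [hcol j]
          _ = ∑ i, q i j * min (2 * ε / w₀ j) (Δ / 2) := by rw [Finset.sum_mul]
          _ ≤ ∑ i, q i j * ‖θ' i - θ j‖ :=
            Finset.sum_le_sum fun i _ => mul_le_mul_of_nonneg_left (hcle i) (hqpos i j)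
          _ ≤ ε := hcol_le j
      rcases min_cases (2 * ε / w₀ j) (Δ / 2) with ⟨hm, _⟩ | ⟨hm, _⟩
      · rw [hm] at hlb
        rw [mul_div_assoc'] at hlb
        rw [mul_comm, mul_div_assoc, div_self (hw₀ne j), mul_one] at hlb
        linarith
      · rw [hm] at hlb
        have : wmin * (Δ / 2) ≤ w₀ j * (Δ / 2) :=
          mul_le_mul_of_nonneg_right (hw₀ j) (by positivity)
        have h2 : wmin * Δ / 2 ≤ ε := by
          calc wmin * Δ / 2 = wmin * (Δ / 2) := by ring
            _ ≤ w₀ j * (Δ / 2) := this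
            _ ≤ ε := hlb
        linarith
  -- build the matching function
  choose f hf1 hf2 using key
  have hinj : Function.Injective f := by
    intro j j' hjj'
    by_contra hne
    have h1 : Δ ≤ ‖θ j - θ j'‖ := hsep j j' hne
    have h2 : ‖θ j - θ j'‖ ≤ ‖θ' (f j) - θ j‖ + ‖θ' (f j') - θ j'‖ := by
      have : θ j - θ j' = (θ' (f j') - θ j') - (θ' (f j) - θ j) := by
        rw [hjj']; abel
      rw [this]
      calc ‖(θ' (f j') - θ j') - (θ' (f j) - θ j)‖
          ≤ ‖θ' (f j') - θ j'‖ + ‖θ' (f j) - θ j‖ := norm_sub_le _ _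
        _ = _ := by ring
    have := hf2 j
    have := hf2 j'
    linarith
  have hbij : Function.Bijective f := Finite.injective_iff_bijective.mp hinj
  refine ⟨Equiv.ofBijective f hbij, fun j => ?_⟩
  have heq : ε / (w₀ j / 2) = 2 * ε / w₀ j := by
    rw [div_div_eq_mul_div, mul_comm]
  constructor
  · rw [heq]
    exact hf1 j
  · rw [heq]
    gcongr
    all_goals first | linarith | exact hw₀ j
end
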